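/- arXiv:1107.2002 — 3 statements merged into one kernel-verified Lean document; each statement's English description precedes it below -/
import Mathlib

section
/- Combining the previous two results: for a rotationally symmetric potential U in the local east-north-up frame at P, U_xx(P) = |∇U(P)| · cos(arcsin(U_Z(P)/|∇U(P)|)) · (X_P² + Y_P²)^{−1/2}, i.e. the east-east second derivative equals |∇U| times the principal curvature along the east direction. -/
open Real

/-- First directional (partial) derivative of `U` at `P` along `v`. -/
noncomputable def pd (U : (Fin 3 → ℝ) → ℝ) (P v : Fin 3 → ℝ) : ℝ := fderiv ℝ U P v

/-- Second directional derivative (Hessian bilinear form) of `U` at `P` along `v, w`. -/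
noncomputable def pd2 (U : (Fin 3 → ℝ) → ℝ) (P v w : Fin 3 → ℝ) : ℝ :=
  fderiv ℝ (fun p => fderiv ℝ U p w) P v

/-- Gradient vector of `U` at `P` (components are the partial derivatives). -/
noncomputable def gradv (U : (Fin 3 → ℝ) → ℝ) (P : Fin 3 → ℝ) : Fin 3 → ℝ :=
  fun i => fderiv ℝ U P (Pi.single i 1)

/-- Euclidean norm on `ℝ³`. -/
noncomputable def enorm3 (v : Fin 3 → ℝ) : ℝ := Real.sqrt (v 0 ^ 2 + v 1 ^ 2 + v 2 ^ 2)

/-- Euclidean dot product on `ℝ³`. -/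
def dot3 (v w : Fin 3 → ℝ) : ℝ := v 0 * w 0 + v 1 * w 1 + v 2 * w 2

/-- Cross product on `ℝ³`. -/
def cross3 (v w : Fin 3 → ℝ) : Fin 3 → ℝ :=
  ![v 1 * w 2 - v 2 * w 1, v 2 * w 0 - v 0 * w 2, v 0 * w 1 - v 1 * w 0]

/-- Standard basis vectors of `ℝ³`. -/
def e3 (i : Fin 3) : Fin 3 → ℝ := Pi.single i 1

/-- Expansion of a continuous linear functional on `ℝ³` in the standard basis. -/
lemma lin3 (L : (Fin 3 → ℝ) →L[ℝ] ℝ) (v : Fin 3 → ℝ) :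
    L v = v 0 * L (Pi.single 0 1) + v 1 * L (Pi.single 1 1) + v 2 * L (Pi.single 2 1) := by
  have hv : v = v 0 • (Pi.single 0 1 : Fin 3 → ℝ) + v 1 • (Pi.single 1 1 : Fin 3 → ℝ)
      + v 2 • (Pi.single 2 1 : Fin 3 → ℝ) := by
    funext i; fin_cases i <;> simp [Pi.single_apply]
  conv_lhs => rw [hv]
  simp [smul_eq_mul]

lemma aux_div (a r : ℝ) (hr : r ≠ 0) : r⁻¹ * (r⁻¹ * (a * r)) = a / r := by
  field_simp

/-- for a rotationally symmetric potential, in the local east–north–up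
frame at `P`, `U_xx(P) = |∇U(P)| · cos(arcsin(U_Z/|∇U|)) · (X_P² + Y_P²)^(-1/2)`,
i.e. the east–east second derivative equals `|∇U|` times the principal curvature along
the east direction. -/
theorem stmt10 (U : (Fin 3 → ℝ) → ℝ) (hU : ContDiff ℝ 2 U) (P : Fin 3 → ℝ)
    (hsym : ∀ (θ : ℝ) (v : Fin 3 → ℝ),
      U ![Real.cos θ * v 0 - Real.sin θ * v 1,
          Real.sin θ * v 0 + Real.cos θ * v 1, v 2] = U v)
    (haxis : P 0 ^ 2 + P 1 ^ 2 ≠ 0)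
    (hg : gradv U P ≠ 0)
    -- ∇U(P) points to the outward side (consistent with the outward-normal convention
    -- `k₁ = U_xx/|∇U|` for the principal curvature along the east direction)
    (hout : 0 ≤ gradv U P 0 * P 0 + gradv U P 1 * P 1) :
    let n := enorm3 (gradv U P)
    let x : Fin 3 → ℝ := (Real.sqrt (P 0 ^ 2 + P 1 ^ 2))⁻¹ • ![-(P 1), P 0, 0]
    pd2 U P x x =
      n * Real.cos (Real.arcsin (gradv U P 2 / n)) / Real.sqrt (P 0 ^ 2 + P 1 ^ 2) := by
  intro n x
  -- basic differentiability facts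
  have hUd : Differentiable ℝ U := hU.differentiable (by norm_num)
  have hfd : ContDiff ℝ 1 (fderiv ℝ U) := hU.fderiv_right (by norm_num)
  have hfdd : Differentiable ℝ (fderiv ℝ U) := hfd.differentiable (by norm_num)
  -- the rotation orbit through `P` and its derivatives
  set c : ℝ → (Fin 3 → ℝ) := fun θ =>
    ![Real.cos θ * P 0 - Real.sin θ * P 1, Real.sin θ * P 0 + Real.cos θ * P 1, P 2] with hc
  set c1 : ℝ → (Fin 3 → ℝ) := fun θ =>
    ![-Real.sin θ * P 0 - Real.cos θ * P 1, Real.cos θ * P 0 - Real.sin θ * P 1, 0] with hc1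
  have hcd : ∀ θ, HasDerivAt c (c1 θ) θ := by
    intro θ
    rw [hasDerivAt_pi]
    intro i
    fin_cases i
    · simpa [hc, hc1, Pi.sub_def] using ((Real.hasDerivAt_cos θ).mul_const (P 0)).sub
        ((Real.hasDerivAt_sin θ).mul_const (P 1))
    · simpa [hc, hc1, Pi.add_def, ← sub_eq_add_neg] using ((Real.hasDerivAt_sin θ).mul_const (P 0)).add
        ((Real.hasDerivAt_cos θ).mul_const (P 1))
    · simpa [hc, hc1] using hasDerivAt_const θ (P 2)
  have hc1d : HasDerivAt c1 ![-(P 0), -(P 1), 0] 0 := by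
    rw [hasDerivAt_pi]
    intro i
    fin_cases i
    · simpa [hc, hc1, Pi.sub_def] using (((Real.hasDerivAt_sin 0).neg.mul_const (P 0)).sub
        ((Real.hasDerivAt_cos 0).mul_const (P 1)))
    · simpa [hc, hc1, Pi.sub_def] using (((Real.hasDerivAt_cos 0).mul_const (P 0)).sub
        ((Real.hasDerivAt_sin 0).mul_const (P 1)))
    · simpa [hc, hc1] using hasDerivAt_const (0:ℝ) (0:ℝ)
  have hc0 : c 0 = P := by funext i; fin_cases i <;> simp [hc]
  have hc10 : c1 0 = ![-(P 1), P 0, 0] := by funext i; fin_cases i <;> simp [hc1]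
  -- first-order consequence of rotational symmetry
  have hF0 : ∀ θ, fderiv ℝ U (c θ) (c1 θ) = 0 := by
    intro θ
    have hcomp : HasDerivAt (fun t => U (c t)) (fderiv ℝ U (c θ) (c1 θ)) θ :=
      (hUd (c θ)).hasFDerivAt.comp_hasDerivAt θ (hcd θ)
    have hconst : HasDerivAt (fun t => U (c t)) 0 θ := by
      refine (hasDerivAt_const θ (U P)).congr_of_eventuallyEq ?_
      filter_upwards with t
      show U (c t) = U P
      rw [hc]
      exact hsym t P
    exact hcomp.unique hconst
  -- second-order consequence
  have hA : HasDerivAt (fun θ => fderiv ℝ U (c θ)) (fderiv ℝ (fderiv ℝ U) P (c1 0)) 0 := by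
    have := ((hfdd (c 0)).hasFDerivAt).comp_hasDerivAt 0 (hcd 0)
    rwa [hc0] at this
  have hF' : HasDerivAt (fun θ => fderiv ℝ U (c θ) (c1 θ))
      (fderiv ℝ (fderiv ℝ U) P (c1 0) (c1 0) + fderiv ℝ U (c 0) ![-(P 0), -(P 1), 0]) 0 :=
    hA.clm_apply hc1d
  have hzero : HasDerivAt (fun θ => fderiv ℝ U (c θ) (c1 θ)) 0 0 := by
    refine (hasDerivAt_const (0:ℝ) (0:ℝ)).congr_of_eventuallyEq ?_
    filter_upwards with t
    exact hF0 t
  have hD : fderiv ℝ (fderiv ℝ U) P (c1 0) (c1 0) + fderiv ℝ U P ![-(P 0), -(P 1), 0] = 0 := by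
    have := hF'.unique hzero
    rwa [hc0] at this
  -- identify pd2 with the second fderiv
  have hpd2 : ∀ v w : Fin 3 → ℝ, pd2 U P v w = fderiv ℝ (fderiv ℝ U) P v w := by
    intro v w
    have h : HasFDerivAt (fun p => fderiv ℝ U p w)
        ((ContinuousLinearMap.apply ℝ ℝ w).comp (fderiv ℝ (fderiv ℝ U) P)) P :=
      (ContinuousLinearMap.apply ℝ ℝ w).hasFDerivAt.comp P (hfdd P).hasFDerivAt
    rw [pd2, h.fderiv]
    simp
  -- abbreviations
  set g0 : ℝ := gradv U P 0 with hg0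
  set g1 : ℝ := gradv U P 1 with hg1
  set g2 : ℝ := gradv U P 2 with hg2
  have hgv : ∀ v : Fin 3 → ℝ, fderiv ℝ U P v = v 0 * g0 + v 1 * g1 + v 2 * g2 := by
    intro v
    exact lin3 (fderiv ℝ U P) v
  -- first-order relation: the gradient is radial in the horizontal plane
  have hlin : -(P 1) * g0 + P 0 * g1 = 0 := by
    have := hF0 0
    rw [hc0, hc10] at this
    have h2 := hgv ![-(P 1), P 0, 0]
    rw [this] at h2
    simp at h2
    linarith [h2]
  -- second-order relation
  have hsec : fderiv ℝ (fderiv ℝ U) P ![-(P 1), P 0, 0] ![-(P 1), P 0, 0]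
      = P 0 * g0 + P 1 * g1 := by
    rw [hc10] at hD
    have h2 := hgv ![-(P 0), -(P 1), 0]
    simp at h2
    rw [h2] at hD
    linarith [hD]
  -- positivity facts
  have hrp : 0 < P 0 ^ 2 + P 1 ^ 2 :=
    lt_of_le_of_ne (by positivity) (Ne.symm haxis)
  have hr : 0 < Real.sqrt (P 0 ^ 2 + P 1 ^ 2) := Real.sqrt_pos.mpr hrp
  have hr2 : Real.sqrt (P 0 ^ 2 + P 1 ^ 2) ^ 2 = P 0 ^ 2 + P 1 ^ 2 :=
    Real.sq_sqrt hrp.le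
  have hnpos : 0 < n := by
    have hsum : 0 < g0 ^ 2 + g1 ^ 2 + g2 ^ 2 := by
      rcases lt_or_eq_of_le (by positivity : (0:ℝ) ≤ g0 ^ 2 + g1 ^ 2 + g2 ^ 2) with h | h
      · exact h
      · exfalso
        apply hg
        have h0 : g0 = 0 := by nlinarith [sq_nonneg g0, sq_nonneg g1, sq_nonneg g2]
        have h1 : g1 = 0 := by nlinarith [sq_nonneg g0, sq_nonneg g1, sq_nonneg g2]
        have h2 : g2 = 0 := by nlinarith [sq_nonneg g0, sq_nonneg g1, sq_nonneg g2]
        rw [hg0] at h0; rw [hg1] at h1; rw [hg2] at h2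
        funext i
        fin_cases i
        · simpa using h0
        · simpa using h1
        · simpa using h2
    exact Real.sqrt_pos.mpr hsum
  have hn2 : n ^ 2 = g0 ^ 2 + g1 ^ 2 + g2 ^ 2 := Real.sq_sqrt (by positivity)
  -- compute the LHS
  have hL : pd2 U P x x
      = (Real.sqrt (P 0 ^ 2 + P 1 ^ 2))⁻¹ * ((Real.sqrt (P 0 ^ 2 + P 1 ^ 2))⁻¹
        * (P 0 * g0 + P 1 * g1)) := by
    rw [hpd2]
    show fderiv ℝ (fderiv ℝ U) P ((Real.sqrt (P 0 ^ 2 + P 1 ^ 2))⁻¹ • ![-(P 1), P 0, 0])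
        ((Real.sqrt (P 0 ^ 2 + P 1 ^ 2))⁻¹ • ![-(P 1), P 0, 0]) = _
    simp only [map_smul, ContinuousLinearMap.smul_apply, ContinuousLinearMap.map_smul,
      smul_eq_mul, hsec]
  -- key scalar identity: horizontal dot product equals |horizontal gradient| · r
  have hs : 0 ≤ P 0 * g0 + P 1 * g1 := by linarith [hout]
  have hkey : P 0 * g0 + P 1 * g1 = Real.sqrt (g0 ^ 2 + g1 ^ 2) * Real.sqrt (P 0 ^ 2 + P 1 ^ 2) := by
    have hsq : (P 0 * g0 + P 1 * g1) ^ 2 = (g0 ^ 2 + g1 ^ 2) * (P 0 ^ 2 + P 1 ^ 2) := by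
      linear_combination (-(-(P 1) * g0 + P 0 * g1)) * hlin
    have : P 0 * g0 + P 1 * g1 = Real.sqrt ((P 0 * g0 + P 1 * g1) ^ 2) :=
      (Real.sqrt_sq hs).symm
    rw [this, hsq, Real.sqrt_mul (by positivity)]
  -- compute the RHS
  have hcos : n * Real.cos (Real.arcsin (g2 / n)) = Real.sqrt (g0 ^ 2 + g1 ^ 2) := by
    rw [Real.cos_arcsin]
    have he : (g0 ^ 2 + g1 ^ 2 : ℝ) = n ^ 2 * (1 - (g2 / n) ^ 2) := by
      field_simp
      linarith [hn2]
    rw [he, Real.sqrt_mul (sq_nonneg n), Real.sqrt_sq hnpos.le]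
  rw [hL, hkey, hcos]
  exact aux_div _ _ hr.ne'
end

section
/- Plumbline curvature formula in Cartesian coordinates: the curvature at P of the integral curve of the gradient field ∇U (the plumbline) of a C² function U with ∇U(P) ≠ 0 equals |∇U × (Hess U · ∇U)| / |∇U|³ evaluated at P, which in components is the expression k_pl(P) = { [U_Y(U_XZ U_X + U_YZ U_Y + U_ZZ U_Z) − U_Z(U_XY U_X + U_YY U_Y + U_YZ U_Z)]² + [U_Z(U_XX U_X + U_XY U_Y + U_XZ U_Z) − U_X(U_XZ U_X + U_YZ U_Y + U_ZZ U_Z)]² + [U_X(U_XY U_X + U_YY U_Y + U_YZ U_Z) − U_Y(U_XX U_X + U_XY U_Y + U_XZ U_Z)]² }^{1/2} / (U_X² + U_Y² + U_Z²)^{3/2}. -/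
open Real

set_option maxHeartbeats 1000000

/-- plumbline curvature in Cartesian coordinates: the curvature at `P`
of the integral curve of the unit gradient field equals
`|∇U × (Hess U · ∇U)| / |∇U|³`, which in components is formula (1.12). -/
theorem stmt11 (U : (Fin 3 → ℝ) → ℝ) (hU : ContDiff ℝ 2 U) (P : Fin 3 → ℝ)
    (hg : gradv U P ≠ 0)
    (c : ℝ → Fin 3 → ℝ) (hc0 : c 0 = P)
    (hc : ∀ t, HasDerivAt c ((enorm3 (gradv U (c t)))⁻¹ • gradv U (c t)) t) :
    let UX := pd U P (e3 0); let UY := pd U P (e3 1); let UZ := pd U P (e3 2)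
    let UXX := pd2 U P (e3 0) (e3 0); let UYY := pd2 U P (e3 1) (e3 1)
    let UZZ := pd2 U P (e3 2) (e3 2); let UXY := pd2 U P (e3 0) (e3 1)
    let UXZ := pd2 U P (e3 0) (e3 2); let UYZ := pd2 U P (e3 1) (e3 2)
    let g := gradv U P
    -- Hess U · ∇U
    let Hg : Fin 3 → ℝ := ![UXX * UX + UXY * UY + UXZ * UZ,
                            UXY * UX + UYY * UY + UYZ * UZ,
                            UXZ * UX + UYZ * UY + UZZ * UZ]
    let kpl := enorm3 (deriv (deriv c) 0)
    kpl = enorm3 (cross3 g Hg) / enorm3 g ^ 3 ∧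
    kpl = Real.sqrt
        ((UY * (UXZ * UX + UYZ * UY + UZZ * UZ)
            - UZ * (UXY * UX + UYY * UY + UYZ * UZ)) ^ 2
          + (UZ * (UXX * UX + UXY * UY + UXZ * UZ)
            - UX * (UXZ * UX + UYZ * UY + UZZ * UZ)) ^ 2
          + (UX * (UXY * UX + UYY * UY + UYZ * UZ)
            - UY * (UXX * UX + UXY * UY + UXZ * UZ)) ^ 2) /
        (UX ^ 2 + UY ^ 2 + UZ ^ 2) ^ ((3:ℝ) / 2) := by
  
  intro UX UY UZ UXX UYY UZZ UXY UXZ UYZ g Hg kpl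
  -- analysis setup
  have hUdiff : Differentiable ℝ U := hU.differentiable (by norm_num)
  have hU1 : ContDiff ℝ 1 (fderiv ℝ U) := hU.fderiv_right (by norm_num)
  set f : (Fin 3 → ℝ) → ((Fin 3 → ℝ) →L[ℝ] ℝ) := fderiv ℝ U with hfdef
  have hfd : Differentiable ℝ f := hU1.differentiable (by norm_num)
  set B := fderiv ℝ f P with hBdef
  have hB : HasFDerivAt f B P := hfd.differentiableAt.hasFDerivAt
  have hUd : ∀ y, HasFDerivAt U (f y) y := fun y => (hUdiff y).hasFDerivAt
  have hsymm : ∀ v w, B v w = B w v := fun v w => second_derivative_symmetric hUd hB v w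
  have hEval : ∀ w, HasFDerivAt (fun p => f p w) (B.flip w) P := by
    intro w
    have := hB.clm_apply (hasFDerivAt_const w P)
    simpa using this
  have hpd2 : ∀ v w, pd2 U P v w = B v w := by
    intro v w
    show fderiv ℝ (fun p => f p w) P v = B v w
    rw [(hEval w).fderiv]; rfl
  -- scalar quantities
  have hg0 : g 0 = UX := rfl
  have hg1 : g 1 = UY := rfl
  have hg2 : g 2 = UZ := rfl
  set s : ℝ := UX ^ 2 + UY ^ 2 + UZ ^ 2 with hsdef
  have hs : 0 < s := by
    obtain ⟨i, hi⟩ := Function.ne_iff.1 hg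
    rw [hsdef]
    fin_cases i
    · have h1 : UX ≠ 0 := hi
      nlinarith [sq_nonneg UY, sq_nonneg UZ, sq_nonneg UX, mul_self_pos.2 h1, sq_abs UX]
    · have h1 : UY ≠ 0 := hi
      nlinarith [sq_nonneg UY, sq_nonneg UZ, sq_nonneg UX, mul_self_pos.2 h1]
    · have h1 : UZ ≠ 0 := hi
      nlinarith [sq_nonneg UY, sq_nonneg UZ, sq_nonneg UX, mul_self_pos.2 h1]
  set a : ℝ := Real.sqrt s with hadef
  have ha : 0 < a := Real.sqrt_pos.2 hs
  have ha2 : a ^ 2 = s := Real.sq_sqrt hs.le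
  have hag : enorm3 g = a := rfl
  -- Hessian entries
  have h00 : B (e3 0) (e3 0) = UXX := (hpd2 _ _).symm
  have h11 : B (e3 1) (e3 1) = UYY := (hpd2 _ _).symm
  have h22 : B (e3 2) (e3 2) = UZZ := (hpd2 _ _).symm
  have h01 : B (e3 0) (e3 1) = UXY := (hpd2 _ _).symm
  have h10 : B (e3 1) (e3 0) = UXY := by rw [hsymm]; exact (hpd2 _ _).symm
  have h02 : B (e3 0) (e3 2) = UXZ := (hpd2 _ _).symm
  have h20 : B (e3 2) (e3 0) = UXZ := by rw [hsymm]; exact (hpd2 _ _).symm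
  have h12 : B (e3 1) (e3 2) = UYZ := (hpd2 _ _).symm
  have h21 : B (e3 2) (e3 1) = UYZ := by rw [hsymm]; exact (hpd2 _ _).symm
  -- decomposition
  have hdecomp : ∀ v : Fin 3 → ℝ, v = v 0 • e3 0 + v 1 • e3 1 + v 2 • e3 2 := by
    intro v; funext i
    fin_cases i <;> simp [e3]
  have hBg : ∀ w, B g w = g 0 * B (e3 0) w + g 1 * B (e3 1) w + g 2 * B (e3 2) w := by
    intro w
    conv_lhs => rw [hdecomp g]
    simp [ContinuousLinearMap.add_apply, ContinuousLinearMap.smul_apply]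
  -- q values
  have hH0 : Hg 0 = UXX * UX + UXY * UY + UXZ * UZ := rfl
  have hH1 : Hg 1 = UXY * UX + UYY * UY + UYZ * UZ := rfl
  have hH2 : Hg 2 = UXZ * UX + UYZ * UY + UZZ * UZ := rfl
  have hBgH : ∀ j, B g (e3 j) = Hg j := by
    have e0 : B g (e3 0) = Hg 0 := by
      rw [hBg, hg0, hg1, hg2, h00, h10, h20, hH0]; ring
    have e1 : B g (e3 1) = Hg 1 := by
      rw [hBg, hg0, hg1, hg2, h01, h11, h21, hH1]; ring
    have e2 : B g (e3 2) = Hg 2 := by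
      rw [hBg, hg0, hg1, hg2, h02, h12, h22, hH2]; ring
    intro j
    fin_cases j
    · exact e0
    · exact e1
    · exact e2
  have hq : ∀ j, B ((enorm3 g)⁻¹ • g) (e3 j) = a⁻¹ * Hg j := by
    intro j
    rw [hag, map_smul, ContinuousLinearMap.smul_apply, smul_eq_mul, hBgH]
  -- derivative of c at 0
  have hn : HasDerivAt c ((enorm3 g)⁻¹ • g) 0 := by
    have := hc 0
    rwa [hc0] at this
  have hcomp : ∀ w, HasDerivAt (fun t => f (c t) w) (B ((enorm3 g)⁻¹ • g) w) 0 := by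
    intro w
    have hE' : HasFDerivAt (fun p => f p w) (B.flip w) (c 0) := hc0.symm ▸ hEval w
    exact hE'.comp_hasDerivAt 0 hn
  have hdc : deriv c = fun t => (enorm3 (gradv U (c t)))⁻¹ • gradv U (c t) :=
    funext fun t => (hc t).deriv
  have hvi : ∀ j, f (c 0) (e3 j) = g j := by intro j; rw [hc0]; rfl
  have hss : g 0 ^ 2 + g 1 ^ 2 + g 2 ^ 2 = s := by rw [hg0, hg1, hg2, hsdef]
  have hWd : HasDerivAt (deriv c)
      (fun i => s⁻¹ * Hg i - s⁻¹ ^ 2 * dot3 g Hg * g i) 0 := by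
    rw [hdc]
    refine hasDerivAt_pi.2 fun i => ?_
    have h0 := hcomp (e3 0); have h1 := hcomp (e3 1); have h2 := hcomp (e3 2)
    have hi := hcomp (e3 i)
    have hsig := ((h0.pow 2).add (h1.pow 2)).add (h2.pow 2)
    have hsig0 : f (c 0) (e3 0) ^ 2 + f (c 0) (e3 1) ^ 2 + f (c 0) (e3 2) ^ 2 ≠ 0 := by
      rw [hvi 0, hvi 1, hvi 2, hss]; exact hs.ne'
    have hsqrt := hsig.sqrt hsig0
    have hsqrtne : Real.sqrt (f (c 0) (e3 0) ^ 2 + f (c 0) (e3 1) ^ 2 + f (c 0) (e3 2) ^ 2) ≠ 0 := by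
      rw [hvi 0, hvi 1, hvi 2, hss]; exact Real.sqrt_ne_zero'.mpr hs
    have hinv := hsqrt.inv hsqrtne
    have hfull := hinv.mul hi
    have hfun : (fun t => ((enorm3 (gradv U (c t)))⁻¹ • gradv U (c t)) i)
        = (fun t => (Real.sqrt (f (c t) (e3 0) ^ 2 + f (c t) (e3 1) ^ 2 + f (c t) (e3 2) ^ 2))⁻¹
            * f (c t) (e3 i)) := rfl
    rw [hfun]
    refine hfull.congr_deriv ?_
    simp only [Pi.add_apply, Pi.pow_apply, Pi.inv_apply]
    rw [hvi 0, hvi 1, hvi 2, hvi i, hss, hq 0, hq 1, hq 2, hq i, ← hadef, ← ha2]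
    simp only [dot3]
    norm_num
    field_simp
    ring
  have hdd : deriv (deriv c) 0 = fun i => s⁻¹ * Hg i - s⁻¹ ^ 2 * dot3 g Hg * g i := hWd.deriv
  have hE0 : (0:ℝ) ≤ (g 1 * Hg 2 - g 2 * Hg 1) ^ 2 + (g 2 * Hg 0 - g 0 * Hg 2) ^ 2
      + (g 0 * Hg 1 - g 1 * Hg 0) ^ 2 := by positivity
  have ha3 : a ^ 3 = s ^ ((3:ℝ)/2) := by
    rw [hadef, Real.sqrt_eq_rpow, ← Real.rpow_natCast (s ^ (1/(2:ℝ))) 3, ← Real.rpow_mul hs.le]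
    norm_num
  have hkpl : kpl = Real.sqrt ((g 1 * Hg 2 - g 2 * Hg 1) ^ 2 + (g 2 * Hg 0 - g 0 * Hg 2) ^ 2
      + (g 0 * Hg 1 - g 1 * Hg 0) ^ 2) / a ^ 3 := by
    show enorm3 (deriv (deriv c) 0) = _
    rw [hdd]
    show Real.sqrt ((s⁻¹ * Hg 0 - s⁻¹ ^ 2 * dot3 g Hg * g 0) ^ 2
        + (s⁻¹ * Hg 1 - s⁻¹ ^ 2 * dot3 g Hg * g 1) ^ 2
        + (s⁻¹ * Hg 2 - s⁻¹ ^ 2 * dot3 g Hg * g 2) ^ 2) = _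
    have hsum : (s⁻¹ * Hg 0 - s⁻¹ ^ 2 * dot3 g Hg * g 0) ^ 2
        + (s⁻¹ * Hg 1 - s⁻¹ ^ 2 * dot3 g Hg * g 1) ^ 2
        + (s⁻¹ * Hg 2 - s⁻¹ ^ 2 * dot3 g Hg * g 2) ^ 2
        = ((g 1 * Hg 2 - g 2 * Hg 1) ^ 2 + (g 2 * Hg 0 - g 0 * Hg 2) ^ 2
          + (g 0 * Hg 1 - g 1 * Hg 0) ^ 2) / s ^ 3 := by
      simp only [dot3]
      rw [hH0, hH1, hH2, hg0, hg1, hg2, hsdef]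
      have hs' : UX ^ 2 + UY ^ 2 + UZ ^ 2 ≠ 0 := hs.ne'
      field_simp
      ring
    rw [hsum, Real.sqrt_div hE0, show s ^ 3 = (a ^ 3) ^ 2 by rw [← ha2]; ring,
      Real.sqrt_sq (by positivity)]
  constructor
  · rw [hkpl, hag]
    congr 1
  · rw [hkpl, ha3]
    congr 1
end

section
/- For a potential U satisfying the generalized Laplace equation ΔU = 2ω² (where ω is the rotation rate), the Eötvös matrix in the local frame of a rotationally symmetric field takes the form Eötvös(P) = [[U_xx, 0, 0], [0, |γ|² K_G/U_xx, −|γ| k_pl], [0, −|γ| k_pl, 2ω² − U_xx − |γ|² K_G/U_xx]], where |γ| = |∇U(P)|, K_G is the Gauss curvature of the level surface at P, and k_pl is the plumbline curvature at P. -/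
open Real

/-- Auxiliary: rows orthonormal implies columns orthonormal for a 3×3 frame. -/
lemma col_orth3 (x y z : Fin 3 → ℝ)
    (hx' : x 0 * x 0 + x 1 * x 1 + x 2 * x 2 = 1)
    (hy' : y 0 * y 0 + y 1 * y 1 + y 2 * y 2 = 1)
    (hzz' : z 0 * z 0 + z 1 * z 1 + z 2 * z 2 = 1)
    (hxy' : x 0 * y 0 + x 1 * y 1 + x 2 * y 2 = 0)
    (hxz' : x 0 * z 0 + x 1 * z 1 + x 2 * z 2 = 0)
    (hyz' : y 0 * z 0 + y 1 * z 1 + y 2 * z 2 = 0) :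
    ∀ i j : Fin 3, x i * x j + y i * y j + z i * z j = if i = j then 1 else 0 := by
  have hMM : (Matrix.of fun i j => ![x, y, z] i j) *
      (Matrix.of fun i j => ![x, y, z] i j).transpose = 1 := by
    ext i j
    rw [Matrix.mul_apply, Fin.sum_univ_three]
    fin_cases i <;> fin_cases j <;> simp [Matrix.one_apply] <;> linarith
  have hMM' := mul_eq_one_comm.mp hMM
  intro i j
  have h := congrFun (congrFun hMM' i) j
  rw [Matrix.mul_apply, Fin.sum_univ_three] at h
  simp only [Matrix.transpose_apply, Matrix.of_apply, Matrix.cons_val_zero,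
    Matrix.cons_val_one, Matrix.head_cons, Matrix.cons_val_two, Matrix.tail_cons] at h
  rw [h, Matrix.one_apply]

/-- Auxiliary: decomposition of a vector over the standard basis. -/
lemma decomp3 (v : Fin 3 → ℝ) : v = v 0 • e3 0 + v 1 • e3 1 + v 2 • e3 2 := by
  funext i
  fin_cases i <;> simp [e3, Pi.single, Function.update]

/-- Auxiliary: expansion of a continuous bilinear form over the standard basis. -/
lemma bilin_expand3 (H : (Fin 3 → ℝ) →L[ℝ] (Fin 3 → ℝ) →L[ℝ] ℝ) (v w : Fin 3 → ℝ) :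
    H v w =
      v 0 * w 0 * H (e3 0) (e3 0) + v 0 * w 1 * H (e3 0) (e3 1) + v 0 * w 2 * H (e3 0) (e3 2) +
      v 1 * w 0 * H (e3 1) (e3 0) + v 1 * w 1 * H (e3 1) (e3 1) + v 1 * w 2 * H (e3 1) (e3 2) +
      v 2 * w 0 * H (e3 2) (e3 0) + v 2 * w 1 * H (e3 2) (e3 1) + v 2 * w 2 * H (e3 2) (e3 2) := by
  conv_lhs => rw [decomp3 v, decomp3 w]
  simp [map_add, map_smul]
  ring

/-- Auxiliary: trace of a bilinear form is basis-independent for an orthonormal frame. -/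
lemma trace_invar3 (H : (Fin 3 → ℝ) →L[ℝ] (Fin 3 → ℝ) →L[ℝ] ℝ) (x y z : Fin 3 → ℝ)
    (col : ∀ i j : Fin 3, x i * x j + y i * y j + z i * z j = if i = j then 1 else 0) :
    H x x + H y y + H z z = H (e3 0) (e3 0) + H (e3 1) (e3 1) + H (e3 2) (e3 2) := by
  rw [bilin_expand3 H x x, bilin_expand3 H y y, bilin_expand3 H z z]
  have c00 := col 0 0; have c01 := col 0 1; have c02 := col 0 2
  have c10 := col 1 0; have c11 := col 1 1; have c12 := col 1 2
  have c20 := col 2 0; have c21 := col 2 1; have c22 := col 2 2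
  simp only [Fin.isValue, Fin.reduceEq, if_false, if_true,
    reduceIte] at c00 c01 c02 c10 c11 c12 c20 c21 c22
  generalize H (e3 0) (e3 0) = a00
  generalize H (e3 0) (e3 1) = a01
  generalize H (e3 0) (e3 2) = a02
  generalize H (e3 1) (e3 0) = a10
  generalize H (e3 1) (e3 1) = a11
  generalize H (e3 1) (e3 2) = a12
  generalize H (e3 2) (e3 0) = a20
  generalize H (e3 2) (e3 1) = a21
  generalize H (e3 2) (e3 2) = a22
  linear_combination c00 * a00 + c01 * a01 + c02 * a02 +
    c10 * a10 + c11 * a11 + c12 * a12 +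
    c20 * a20 + c21 * a21 + c22 * a22

/-- for a potential satisfying the generalized Laplace equation
`ΔU = 2ω²`, the Eötvös matrix in the local frame of a rotationally symmetric field is
`[[U_xx, 0, 0], [0, |γ|² K_G/U_xx, -|γ| k_pl], [0, -|γ| k_pl, 2ω² - U_xx - |γ|² K_G/U_xx]]`. -/
theorem stmt13 (U : (Fin 3 → ℝ) → ℝ) (hU : ContDiff ℝ 2 U) (ω : ℝ) (P : Fin 3 → ℝ)
    (hLap : pd2 U P (e3 0) (e3 0) + pd2 U P (e3 1) (e3 1) + pd2 U P (e3 2) (e3 2)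
      = 2 * ω ^ 2)
    (hg : gradv U P ≠ 0)
    (x y z : Fin 3 → ℝ)
    (hx : dot3 x x = 1) (hy : dot3 y y = 1) (hxy : dot3 x y = 0)
    (hxz : dot3 x z = 0) (hyz : dot3 y z = 0)
    (hz : z = (enorm3 (gradv U P))⁻¹ • gradv U P)
    (hrh : cross3 x y = z)
    (hxx : pd2 U P x x ≠ 0)
    -- symmetry of the field
    (hUxy : pd2 U P x y = 0) (hUxz : pd2 U P x z = 0)
    (KG kpl : ℝ)
    (hKG : KG = pd2 U P x x * pd2 U P y y / (enorm3 (gradv U P)) ^ 2)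
    (hkpl : kpl = -(pd2 U P y z) / enorm3 (gradv U P)) :
    let n := enorm3 (gradv U P)
    (!![pd2 U P x x, pd2 U P x y, pd2 U P x z;
        pd2 U P y x, pd2 U P y y, pd2 U P y z;
        pd2 U P z x, pd2 U P z y, pd2 U P z z] : Matrix (Fin 3) (Fin 3) ℝ) =
    !![pd2 U P x x, 0, 0;
       0, n ^ 2 * KG / pd2 U P x x, -(n * kpl);
       0, -(n * kpl), 2 * ω ^ 2 - pd2 U P x x - n ^ 2 * KG / pd2 U P x x] := by
  intro n
  have hn_eq : n = enorm3 (gradv U P) := rfl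
  rw [hn_eq]
  clear hn_eq
  -- norm facts
  have hggnn : (0:ℝ) ≤ gradv U P 0 ^ 2 + gradv U P 1 ^ 2 + gradv U P 2 ^ 2 := by positivity
  have hn2 : enorm3 (gradv U P) ^ 2
      = gradv U P 0 ^ 2 + gradv U P 1 ^ 2 + gradv U P 2 ^ 2 := Real.sq_sqrt hggnn
  have hgg : gradv U P 0 ^ 2 + gradv U P 1 ^ 2 + gradv U P 2 ^ 2 ≠ 0 := by
    intro h
    apply hg
    have h0 : gradv U P 0 = 0 := by
      nlinarith [sq_nonneg (gradv U P 0), sq_nonneg (gradv U P 1), sq_nonneg (gradv U P 2)]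
    have h1 : gradv U P 1 = 0 := by
      nlinarith [sq_nonneg (gradv U P 0), sq_nonneg (gradv U P 1), sq_nonneg (gradv U P 2)]
    have h2 : gradv U P 2 = 0 := by
      nlinarith [sq_nonneg (gradv U P 0), sq_nonneg (gradv U P 1), sq_nonneg (gradv U P 2)]
    funext i
    fin_cases i <;> simp [h0, h1, h2]
  have hn : enorm3 (gradv U P) ≠ 0 := by
    intro h
    rw [h] at hn2
    exact hgg (by linarith)
  -- z ⬝ z = 1
  have hzz : dot3 z z = 1 := by
    rw [hz]
    simp only [dot3, Pi.smul_apply, smul_eq_mul]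
    field_simp
    linarith [hn2]
  -- Hessian as a continuous bilinear map
  have hd : DifferentiableAt ℝ (fderiv ℝ U) P :=
    ((hU.fderiv_right (m := 1) (by norm_num)).differentiable (by norm_num)).differentiableAt
  obtain ⟨H, hHdef⟩ : ∃ H : (Fin 3 → ℝ) →L[ℝ] (Fin 3 → ℝ) →L[ℝ] ℝ,
      H = fderiv ℝ (fderiv ℝ U) P := ⟨_, rfl⟩
  have hpd2 : ∀ v w, pd2 U P v w = H v w := by
    intro v w
    have h2 := fderiv_clm_apply (c := fderiv ℝ U) (u := fun _ => w) hd (differentiableAt_const w)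
    rw [pd2, h2, hHdef]
    simp
  have hsymm : ∀ v w, H v w = H w v := by
    intro v w
    rw [hHdef]
    exact second_derivative_symmetric
      (fun p => (hU.differentiable (by norm_num)).differentiableAt.hasFDerivAt)
      hd.hasFDerivAt v w
  -- column orthonormality from row orthonormality
  have hx' := hx; have hy' := hy; have hxy' := hxy
  have hxz' := hxz; have hyz' := hyz; have hzz' := hzz
  simp only [dot3] at hx' hy' hxy' hxz' hyz' hzz'
  have col := col_orth3 x y z hx' hy' hzz' hxy' hxz' hyz'
  -- trace invariance
  have hLap' : H (e3 0) (e3 0) + H (e3 1) (e3 1) + H (e3 2) (e3 2) = 2 * ω ^ 2 := by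
    rw [← hpd2, ← hpd2, ← hpd2]; exact hLap
  have trace : H x x + H y y + H z z = 2 * ω ^ 2 := by
    rw [trace_invar3 H x y z col]
    exact hLap'
  -- component facts
  have hyx : pd2 U P y x = 0 := by rw [hpd2, hsymm, ← hpd2, hUxy]
  have hzx : pd2 U P z x = 0 := by rw [hpd2, hsymm, ← hpd2, hUxz]
  have hyy : pd2 U P y y = enorm3 (gradv U P) ^ 2 * KG / pd2 U P x x := by
    rw [hKG]; field_simp
  have hyzc : pd2 U P y z = -(enorm3 (gradv U P) * kpl) := by
    rw [hkpl]; field_simp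
  have hzy : pd2 U P z y = -(enorm3 (gradv U P) * kpl) := by
    rw [hpd2, hsymm, ← hpd2, hyzc]
  have hzzc : pd2 U P z z
      = 2 * ω ^ 2 - pd2 U P x x - enorm3 (gradv U P) ^ 2 * KG / pd2 U P x x := by
    rw [← hyy]
    have ht : pd2 U P x x + pd2 U P y y + pd2 U P z z = 2 * ω ^ 2 := by
      rw [hpd2, hpd2, hpd2]; exact trace
    linarith
  ext i j
  fin_cases i <;> fin_cases j <;>
    simp only [Matrix.cons_val_zero, Matrix.cons_val_one, Matrix.head_cons,
      Matrix.cons_val_two, Matrix.tail_cons, Matrix.cons_val', Matrix.empty_val',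
      Matrix.cons_val_fin_one, Fin.isValue]
  · rfl
  · exact hUxy
  · exact hUxz
  · exact hyx
  · exact hyy
  · exact hyzc
  · exact hzx
  · exact hzy
  · exact hzzc
end
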